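/- Let γ > 1, a ∈ ℝ, r₀ > 0 with Δ(r₀) > 0 where Δ(r) = r² − 2r + a². Let B, u, c : ℝ → ℝ be differentiable at r₀ with B(r₀) > 0, 0 < u(r₀) < 1, 0 < c(r₀) and c(r₀)² < γ − 1. Define E(r) = ((γ−1)/(γ−1−c(r)²))·√(Δ(r)/(B(r)(1−u(r)²))) and Ξ(r) = √(Δ(r))·c(r)^{2/(γ−1)}·(u(r)/√(1−u(r)²))·((γ−1)/(γ−1−c(r)²))^{1/(γ−1)}·r. If E′(r₀) = 0 and Ξ′(r₀) = 0, then at r = r₀: (u² − c²)·u′ = u(1−u²)·[ c²·(2r² − 3r + a²)/(Δ·r) + (1/2)·(B′/B − Δ′/Δ) ], where Δ′ = 2r − 2. -/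

import Mathlib

set_option maxHeartbeats 1000000


/-- Velocity-gradient equation for stationary adiabatic conical accretion onto a Kerr black
hole: if the specific energy `E` and entropy accretion rate `Ξ` are stationary at `r₀`, then
`(u² − c²)·u′ = u(1−u²)·[c²(2r² − 3r + a²)/(Δr) + (1/2)(B′/B − Δ′/Δ)]` at `r₀`. -/
theorem conical_adiabatic_velocity_gradient (γ a r₀ : ℝ) (hγ : 1 < γ) (hr : 0 < r₀)
    (Δ : ℝ → ℝ) (hΔdef : Δ = fun r => r ^ 2 - 2 * r + a ^ 2) (hΔpos : 0 < Δ r₀)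
    (B u c : ℝ → ℝ)
    (hB : DifferentiableAt ℝ B r₀) (hu : DifferentiableAt ℝ u r₀)
    (hc : DifferentiableAt ℝ c r₀)
    (hB0 : 0 < B r₀) (hu0 : 0 < u r₀) (hu1 : u r₀ < 1)
    (hc0 : 0 < c r₀) (hc1 : (c r₀) ^ 2 < γ - 1)
    (E Ξ : ℝ → ℝ)
    (hE : E = fun r => ((γ - 1) / (γ - 1 - (c r) ^ 2)) *
      Real.sqrt (Δ r / (B r * (1 - (u r) ^ 2))))
    (hΞ : Ξ = fun r => Real.sqrt (Δ r) * (c r) ^ (2 / (γ - 1)) *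
      (u r / Real.sqrt (1 - (u r) ^ 2)) *
      ((γ - 1) / (γ - 1 - (c r) ^ 2)) ^ (1 / (γ - 1)) * r)
    (hE' : deriv E r₀ = 0) (hΞ' : deriv Ξ r₀ = 0) :
    ((u r₀) ^ 2 - (c r₀) ^ 2) * deriv u r₀ =
      u r₀ * (1 - (u r₀) ^ 2) *
        ((c r₀) ^ 2 * (2 * r₀ ^ 2 - 3 * r₀ + a ^ 2) / (Δ r₀ * r₀) +
          (1 / 2) * (deriv B r₀ / B r₀ - (2 * r₀ - 2) / Δ r₀)) := by
  subst hE hΞ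
  have hg : (0:ℝ) < γ - 1 := by linarith
  have hs : (0:ℝ) < γ - 1 - c r₀ ^ 2 := by linarith
  have hV : (0:ℝ) < 1 - u r₀ ^ 2 := by nlinarith
  have hBV : (0:ℝ) < B r₀ * (1 - u r₀ ^ 2) := by positivity
  have hP : (0:ℝ) < Δ r₀ / (B r₀ * (1 - u r₀ ^ 2)) := by positivity
  have hA0 : (0:ℝ) < (γ - 1) / (γ - 1 - c r₀ ^ 2) := by positivity
  set u' := deriv u r₀ with hu'
  set c' := deriv c r₀ with hc'
  set B' := deriv B r₀ with hB'
  have hud := hu.hasDerivAt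
  have hcd := hc.hasDerivAt
  have hBd := hB.hasDerivAt
  have hΔd : HasDerivAt Δ (2 * r₀ - 2) r₀ := by
    rw [hΔdef]
    have h := ((hasDerivAt_pow 2 r₀).sub ((hasDerivAt_id r₀).const_mul 2)).add_const (a ^ 2)
    refine h.congr_deriv ?_
    push_cast; ring
  have hVd : HasDerivAt (fun r => 1 - u r ^ 2) (-(2 * u r₀ * u')) r₀ := by
    have h := (hasDerivAt_const r₀ (1:ℝ)).sub (hud.pow 2)
    refine h.congr_deriv ?_
    push_cast; ring
  have hsd : HasDerivAt (fun r => γ - 1 - c r ^ 2) (-(2 * c r₀ * c')) r₀ := by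
    have h := (hasDerivAt_const r₀ (γ - 1)).sub (hcd.pow 2)
    refine h.congr_deriv ?_
    push_cast; ring
  have hAd : HasDerivAt (fun r => (γ - 1) / (γ - 1 - c r ^ 2))
      ((γ - 1) * (2 * c r₀ * c') / (γ - 1 - c r₀ ^ 2) ^ 2) r₀ := by
    have h := (hasDerivAt_const r₀ (γ - 1)).div hsd hs.ne'
    refine h.congr_deriv ?_
    ring
  -- E part
  have hPd : HasDerivAt (fun r => Δ r / (B r * (1 - u r ^ 2)))
      (((2 * r₀ - 2) * (B r₀ * (1 - u r₀ ^ 2)) -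
        Δ r₀ * (B' * (1 - u r₀ ^ 2) - 2 * B r₀ * u r₀ * u')) /
        (B r₀ * (1 - u r₀ ^ 2)) ^ 2) r₀ := by
    have h := hΔd.div (hBd.mul hVd) hBV.ne'
    refine h.congr_deriv ?_
    simp only [Pi.mul_apply, ← hB']
    ring
  have hqd := hPd.sqrt hP.ne'
  have hEd := hAd.mul hqd
  have hE0 : (γ-1)*(2*c r₀*c')/(γ-1-c r₀^2)^2 * Real.sqrt (Δ r₀ / (B r₀ * (1 - u r₀ ^ 2))) +
      (γ-1)/(γ-1-c r₀^2) * ((((2 * r₀ - 2) * (B r₀ * (1 - u r₀ ^ 2)) -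
        Δ r₀ * (B' * (1 - u r₀ ^ 2) - 2 * B r₀ * u r₀ * u')) /
        (B r₀ * (1 - u r₀ ^ 2)) ^ 2) / (2 * Real.sqrt (Δ r₀ / (B r₀ * (1 - u r₀ ^ 2))))) = 0 :=
    (hE'.symm.trans hEd.deriv).symm
  have hq0 : 0 < Real.sqrt (Δ r₀ / (B r₀ * (1 - u r₀ ^ 2))) := Real.sqrt_pos.mpr hP
  have hq2 : Real.sqrt (Δ r₀ / (B r₀ * (1 - u r₀ ^ 2))) ^ 2 = Δ r₀ / (B r₀ * (1 - u r₀ ^ 2)) :=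
    Real.sq_sqrt hP.le
  have h7 : (γ-1)*(2*c r₀*c')/(γ-1-c r₀^2)^2 * (Δ r₀ / (B r₀ * (1 - u r₀ ^ 2))) +
      (γ-1)/(γ-1-c r₀^2) * (((2 * r₀ - 2) * (B r₀ * (1 - u r₀ ^ 2)) -
        Δ r₀ * (B' * (1 - u r₀ ^ 2) - 2 * B r₀ * u r₀ * u')) /
        (B r₀ * (1 - u r₀ ^ 2)) ^ 2) / 2 = 0 := by
    rw [← hq2]
    have h8gen : ∀ q A Bc C : ℝ, q ≠ 0 → A*q^2 + Bc*C/2 = (A*q + Bc*(C/(2*q)))*q := by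
      intro q A Bc C hq
      field_simp
    have h8 := h8gen (Real.sqrt (Δ r₀ / (B r₀ * (1 - u r₀ ^ 2))))
      ((γ-1)*(2*c r₀*c')/(γ-1-c r₀^2)^2) ((γ-1)/(γ-1-c r₀^2))
      (((2 * r₀ - 2) * (B r₀ * (1 - u r₀ ^ 2)) -
        Δ r₀ * (B' * (1 - u r₀ ^ 2) - 2 * B r₀ * u r₀ * u')) /
        (B r₀ * (1 - u r₀ ^ 2)) ^ 2) hq0.ne'
    rw [h8, hE0, zero_mul]
  have h9 := h7
  field_simp at h9
  have e1 : 4*c r₀*c'*Δ r₀*B r₀*(1-u r₀^2) +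
      (γ-1-c r₀^2)*((2*r₀-2)*B r₀*(1-u r₀^2) - Δ r₀*B'*(1-u r₀^2) +
        2*Δ r₀*B r₀*u r₀*u') = 0 := by
    have h10 : ((γ-1)*((γ-1-c r₀^2)*(B r₀*(1-u r₀^2)))) *
        (4*c r₀*c'*Δ r₀*B r₀*(1-u r₀^2) +
        (γ-1-c r₀^2)*((2*r₀-2)*B r₀*(1-u r₀^2) - Δ r₀*B'*(1-u r₀^2) +
          2*Δ r₀*B r₀*u r₀*u')) = 0 := by linear_combination ((γ-1-c r₀^2)*(B r₀*(1-u r₀^2))) * h9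
    exact (mul_eq_zero.mp h10).resolve_left (by positivity)
  -- Ξ part
  have hSd := hΔd.sqrt hΔpos.ne'
  have hXd := hcd.rpow_const (p := 2/(γ-1)) (Or.inl hc0.ne')
  have hWd := hVd.sqrt hV.ne'
  have hW0 : 0 < Real.sqrt (1 - u r₀ ^ 2) := Real.sqrt_pos.mpr hV
  have hS0 : 0 < Real.sqrt (Δ r₀) := Real.sqrt_pos.mpr hΔpos
  have hF3d := hud.div hWd hW0.ne'
  have hYd := hAd.rpow_const (p := 1/(γ-1)) (Or.inl hA0.ne')
  have chain := (((hSd.mul hXd).mul hF3d).mul hYd).mul (hasDerivAt_id r₀)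
  set S := Real.sqrt (Δ r₀) with hSdef
  set W := Real.sqrt (1 - u r₀ ^ 2) with hWdef
  set X := c r₀ ^ (2/(γ-1)) with hXdef
  set Y := ((γ-1)/(γ-1-c r₀^2)) ^ (1/(γ-1)) with hYdef
  have hS2 : S^2 = Δ r₀ := Real.sq_sqrt hΔpos.le
  have hW2 : W^2 = 1 - u r₀ ^ 2 := Real.sq_sqrt hV.le
  have hX0 : (0:ℝ) < X := Real.rpow_pos_of_pos hc0 _
  have hY0 : (0:ℝ) < Y := Real.rpow_pos_of_pos hA0 _
  have hX1 : c r₀ ^ (2/(γ-1)-1) = X / c r₀ := by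
    rw [hXdef, Real.rpow_sub hc0, Real.rpow_one]
  have hY1 : ((γ-1)/(γ-1-c r₀^2)) ^ (1/(γ-1)-1) = Y / ((γ-1)/(γ-1-c r₀^2)) := by
    rw [hYdef, Real.rpow_sub hA0, Real.rpow_one]
  have hΞ0 : ((((2*r₀-2)/(2*S) * X + S * (c' * (2/(γ-1)) * c r₀ ^ (2/(γ-1)-1))) * (u r₀ / W) +
        S * X * ((u' * W - u r₀ * (-(2*u r₀*u')/(2*W))) / W^2)) * Y +
        S * X * (u r₀ / W) *
          ((γ-1)*(2*c r₀*c')/(γ-1-c r₀^2)^2 * (1/(γ-1)) * ((γ-1)/(γ-1-c r₀^2)) ^ (1/(γ-1)-1))) * r₀ +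
      S * X * (u r₀ / W) * Y * 1 = 0 := (hΞ'.symm.trans chain.deriv).symm
  rw [hX1, hY1] at hΞ0
  field_simp [hS0.ne', hW0.ne', hc0.ne', hg.ne', hs.ne'] at hΞ0
  have h20 : (2*X*Y*W^3*(γ-1-c r₀^2)*(γ-1)^3) *
      ((2*r₀-2)*u r₀*r₀*c r₀*W^2*(γ-1-c r₀^2) + 4*S^2*c'*u r₀*r₀*W^2 +
        2*S^2*u'*r₀*c r₀*(γ-1-c r₀^2) + 2*S^2*u r₀*c r₀*W^2*(γ-1-c r₀^2)) = 0 := by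
    linear_combination (4*W^3*(γ-1-c r₀^2)*(γ-1)^2) * hΞ0 - (4*W^3*(γ-1-c r₀^2)^2*(γ-1)^3*X*Y*S^2*u'*r₀*c r₀) * hW2
  have e2S : (2*r₀-2)*u r₀*r₀*c r₀*W^2*(γ-1-c r₀^2) + 4*S^2*c'*u r₀*r₀*W^2 +
      2*S^2*u'*r₀*c r₀*(γ-1-c r₀^2) + 2*S^2*u r₀*c r₀*W^2*(γ-1-c r₀^2) = 0 :=
    (mul_eq_zero.mp h20).resolve_left (by positivity)
  rw [hS2, hW2] at e2S
  -- final combination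
  have hD : Δ r₀ = r₀^2 - 2*r₀ + a^2 := by rw [hΔdef]
  have key : (γ-1-c r₀^2) * (2*(u r₀^2 - c r₀^2)*u'*Δ r₀*r₀*B r₀) =
      (γ-1-c r₀^2) * (u r₀*(1-u r₀^2)*(2*c r₀^2*B r₀*(2*r₀^2-3*r₀+a^2) +
        r₀*(B'*Δ r₀ - (2*r₀-2)*B r₀))) := by
    linear_combination (u r₀*r₀)*e1 - (c r₀*B r₀)*e2S +
      (2*(γ-1-c r₀^2)*u r₀*(1-u r₀^2)*c r₀^2*B r₀) * hD
  have key2 := mul_left_cancel₀ hs.ne' key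
  field_simp
  linear_combination key2
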